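/- A well-centered ring extension of a Noetherian commutative ring is Noetherian: if R ⊆ S are commutative rings such that every element of S is an associate in S of an element of R, and R is Noetherian, then S is Noetherian. -/
import Mathlib


theorem stmt8 {S : Type*} [CommRing S] (R : Subring S)
    (hwc : ∀ s : S, ∃ u : Sˣ, (u : S) * s ∈ R)
    (hR : IsNoetherianRing R) :
    IsNoetherianRing S := by
  rw [isNoetherianRing_iff_ideal_fg]
  intro I
  set J : Ideal R := I.comap R.subtype with hJ
  have hJfg : J.FG := (isNoetherianRing_iff_ideal_fg R).mp hR J
  have hIm : I = J.map R.subtype := by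
    apply le_antisymm
    · intro s hs
      obtain ⟨u, hu⟩ := hwc s
      have hmem : (⟨(u : S) * s, hu⟩ : R) ∈ J := by
        show R.subtype _ ∈ I
        exact I.mul_mem_left _ hs
      have : (u : S) * s ∈ J.map R.subtype := Ideal.mem_map_of_mem _ hmem
      have h2 : ((u⁻¹ : Sˣ) : S) * ((u : S) * s) ∈ J.map R.subtype :=
        Ideal.mul_mem_left _ _ this
      simpa [← mul_assoc] using h2
    · rw [Ideal.map_le_iff_le_comap]
  exact hIm ▸ hJfg.map _
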